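/- Let λ > 0 and n be a non-negative integer, and let π be the truncated Poisson probability mass function on {0,1,...,n}. For a subset A ⊆ {0,1,...,n}, let g_A : {0,1,...,n+1} → ℝ be the solution of the Poisson Stein equation defined by g_A(0) = 0, g_A(i+1) = ( 1_A(i) − π(A) + i·g_A(i) ) / λ for 0 ≤ i < n, and g_A(n+1) = 0, where π(A) = ∑_{j ∈ A} π_j. Then max_{0 ≤ i ≤ n} | g_A(i+1) − g_A(i) | ≤ (1 − π_0)/λ. -/

import Mathlib

/-- The Poisson pmf: `P(Z = k)` for `Z ~ Po(λ)`. -/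
noncomputable def poissonPmf (lam : ℝ) (k : ℕ) : ℝ :=
  Real.exp (-lam) * lam ^ k / k.factorial

/-- The truncated Poisson pmf on `{0,...,n}`:
`π_i = P(Z = i) / P(Z ≤ n)` for `Z ~ Po(λ)`. -/
noncomputable def truncPoissonPmf (lam : ℝ) (n i : ℕ) : ℝ :=
  poissonPmf lam i / ∑ j ∈ Finset.range (n + 1), poissonPmf lam j

/-- The solution of the truncated Poisson Stein equation for the test function `f = 1_A`,
defined by `g 0 = 0`, the forward recursion `g (i+1) = (1_A(i) - π(A) + i g(i)) / λ`
for `i < n`, and `g (i+1) = 0` for `i ≥ n` (in particular `g (n+1) = 0`). -/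
noncomputable def steinSolPo (lam : ℝ) (n : ℕ) (A : Finset ℕ) : ℕ → ℝ
  | 0 => 0
  | (i + 1) =>
    if i < n then
      ((if i ∈ A then (1 : ℝ) else 0) - ∑ j ∈ A, truncPoissonPmf lam n j
          + i * steinSolPo lam n A i) / lam
    else 0

lemma pp_pos {lam : ℝ} (hlam : 0 < lam) (k : ℕ) : 0 < poissonPmf lam k := by
  unfold poissonPmf
  positivity

lemma pp_succ (lam : ℝ) (k : ℕ) :
    poissonPmf lam (k + 1) * (k + 1) = poissonPmf lam k * lam := by
  unfold poissonPmf
  rw [Nat.factorial_succ]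
  push_cast
  have h1 : (k.factorial : ℝ) ≠ 0 := by positivity
  field_simp
  ring

lemma pmul {lam : ℝ} (hlam : 0 < lam) {a b : ℕ} (h : a ≤ b) :
    poissonPmf lam a * poissonPmf lam (b + 1) ≤ poissonPmf lam (a + 1) * poissonPmf lam b := by
  have ha := pp_succ lam a
  have hb := pp_succ lam b
  have hpa := pp_pos hlam a
  have hpb := pp_pos hlam b
  have hA : poissonPmf lam (a+1) = poissonPmf lam a * lam / (a+1) := by
    field_simp at ha ⊢; linarith
  have hB : poissonPmf lam (b+1) = poissonPmf lam b * lam / (b+1) := by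
    field_simp at hb ⊢; linarith
  rw [hA, hB, mul_div_assoc', div_mul_eq_mul_div, div_le_div_iff₀ (by positivity) (by positivity)]
  have hab : (a:ℝ) + 1 ≤ (b:ℝ) + 1 := by exact_mod_cast by omega
  nlinarith [mul_pos hpa hpb, mul_pos (mul_pos hpa hpb) hlam]

/-- Partial sum of the Poisson pmf: `P(Z ≤ k)`. -/
noncomputable def PP (lam : ℝ) (k : ℕ) : ℝ := ∑ j ∈ Finset.range (k + 1), poissonPmf lam j

lemma PP_pos {lam : ℝ} (hlam : 0 < lam) (k : ℕ) : 0 < PP lam k := by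
  unfold PP
  exact Finset.sum_pos (fun j _ => pp_pos hlam j) ⟨0, by simp⟩

lemma PP_mono {lam : ℝ} (hlam : 0 < lam) {a b : ℕ} (h : a ≤ b) : PP lam a ≤ PP lam b := by
  unfold PP
  apply Finset.sum_le_sum_of_subset_of_nonneg
  · exact Finset.range_subset_range.2 (by omega)
  · exact fun j _ _ => (pp_pos hlam j).le

lemma p0_le_PP {lam : ℝ} (hlam : 0 < lam) (k : ℕ) : poissonPmf lam 0 ≤ PP lam k := by
  unfold PP
  exact Finset.single_le_sum (fun j _ => (pp_pos hlam j).le) (by simp)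

lemma L1 {lam : ℝ} (hlam : 0 < lam) (t : ℕ) :
    PP lam t * poissonPmf lam (t + 1)
      ≤ (PP lam (t + 1) - poissonPmf lam 0) * poissonPmf lam t := by
  have key : ∑ m ∈ Finset.range (t + 1), poissonPmf lam m * poissonPmf lam (t + 1)
      ≤ ∑ m ∈ Finset.range (t + 1), poissonPmf lam (m + 1) * poissonPmf lam t := by
    apply Finset.sum_le_sum
    intro m hm
    exact pmul hlam (Nat.lt_succ_iff.mp (Finset.mem_range.1 hm))
  rw [← Finset.sum_mul, ← Finset.sum_mul] at key
  have hs : ∑ m ∈ Finset.range (t + 1), poissonPmf lam (m + 1)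
      = PP lam (t + 1) - poissonPmf lam 0 := by
    have := Finset.sum_range_succ' (poissonPmf lam) (t + 1)
    unfold PP
    linarith
  rw [hs] at key
  exact key

lemma L2 {lam : ℝ} (hlam : 0 < lam) {t n : ℕ} (h : t + 1 ≤ n) :
    (PP lam n - PP lam (t + 1)) * poissonPmf lam t
      ≤ (PP lam n - PP lam t) * poissonPmf lam (t + 1) := by
  have e1 : PP lam n - PP lam (t + 1) = ∑ m ∈ Finset.Ico (t + 2) (n + 1), poissonPmf lam m := by
    rw [Finset.sum_Ico_eq_sub _ (by omega : t + 2 ≤ n + 1)]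
    unfold PP; ring
  have e2 : PP lam n - PP lam (t + 1 - 1) = ∑ m ∈ Finset.Ico (t + 1) (n + 1), poissonPmf lam m := by
    rw [Finset.sum_Ico_eq_sub _ (by omega : t + 1 ≤ n + 1)]
    unfold PP
    norm_num
  simp only [Nat.add_sub_cancel] at e2
  rw [e1, e2, Finset.sum_mul, Finset.sum_mul, Finset.sum_Ico_eq_sum_range,
    Finset.sum_Ico_eq_sum_range]
  calc ∑ i ∈ Finset.range (n + 1 - (t + 2)), poissonPmf lam (t + 2 + i) * poissonPmf lam t
      ≤ ∑ i ∈ Finset.range (n + 1 - (t + 2)), poissonPmf lam (t + 1 + i) * poissonPmf lam (t + 1) := by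
        apply Finset.sum_le_sum
        intro i _
        have := pmul hlam (by omega : t ≤ t + 1 + i)
        have heq : t + 1 + i + 1 = t + 2 + i := by omega
        rw [heq] at this
        calc poissonPmf lam (t + 2 + i) * poissonPmf lam t
            = poissonPmf lam t * poissonPmf lam (t + 2 + i) := by ring
          _ ≤ poissonPmf lam (t + 1) * poissonPmf lam (t + 1 + i) := this
          _ = poissonPmf lam (t + 1 + i) * poissonPmf lam (t + 1) := by ring
    _ ≤ ∑ i ∈ Finset.range (n + 1 - (t + 1)), poissonPmf lam (t + 1 + i) * poissonPmf lam (t + 1) := by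
        apply Finset.sum_le_sum_of_subset_of_nonneg
        · exact Finset.range_subset_range.2 (by omega)
        · intro j _ _
          exact mul_nonneg (pp_pos hlam _).le (pp_pos hlam _).le

/-- `∑_{k ≤ i, k ∈ A} p_k`. -/
noncomputable def TT (lam : ℝ) (A : Finset ℕ) (i : ℕ) : ℝ :=
  ∑ k ∈ Finset.range (i + 1), (if k ∈ A then poissonPmf lam k else 0)

/-- Numerator of the explicit formula for `g (i+1)`. -/
noncomputable def NN (lam : ℝ) (n : ℕ) (A : Finset ℕ) (i : ℕ) : ℝ :=
  PP lam n * TT lam A i - (∑ k ∈ A, poissonPmf lam k) * PP lam i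

lemma TT_top {lam : ℝ} {n : ℕ} {A : Finset ℕ} (hA : A ⊆ Finset.range (n + 1)) :
    TT lam A n = ∑ k ∈ A, poissonPmf lam k := by
  unfold TT
  rw [Finset.sum_ite_mem, Finset.inter_eq_right.2 hA]

lemma NN_top {lam : ℝ} {n : ℕ} {A : Finset ℕ} (hA : A ⊆ Finset.range (n + 1)) :
    NN lam n A n = 0 := by
  unfold NN
  rw [TT_top hA]
  unfold PP
  ring

lemma piA_eq {lam : ℝ} (n : ℕ) (A : Finset ℕ) :
    ∑ j ∈ A, truncPoissonPmf lam n j = (∑ k ∈ A, poissonPmf lam k) / PP lam n := by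
  unfold truncPoissonPmf PP
  rw [Finset.sum_div]

lemma gform {lam : ℝ} (hlam : 0 < lam) (n : ℕ) (A : Finset ℕ) (hA : A ⊆ Finset.range (n + 1)) :
    ∀ i ≤ n, steinSolPo lam n A (i + 1)
      = NN lam n A i / (lam * PP lam n * poissonPmf lam i) := by
  have hS : PP lam n ≠ 0 := (PP_pos hlam n).ne'
  have hlam' : lam ≠ 0 := hlam.ne'
  intro i
  induction i with
  | zero =>
    intro _
    rw [steinSolPo, piA_eq]
    rcases Nat.eq_zero_or_pos n with hn | hn
    · subst hn
      rw [if_neg (by omega)]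
      rw [NN_top hA]
      simp
    · rw [if_pos hn]
      have hp0 : poissonPmf lam 0 ≠ 0 := (pp_pos hlam 0).ne'
      have h0 : NN lam n A 0 = PP lam n * (if 0 ∈ A then poissonPmf lam 0 else 0)
          - (∑ k ∈ A, poissonPmf lam k) * poissonPmf lam 0 := by
        unfold NN TT PP
        by_cases hmem : 0 ∈ A <;> simp [hmem]
      rw [h0]
      simp only [steinSolPo, Nat.cast_zero, zero_mul, add_zero]
      by_cases hmem : 0 ∈ A <;> simp only [hmem, if_true, if_false] <;> field_simp <;> ring
  | succ i ih =>
    intro hin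
    have hi : i ≤ n := by omega
    have ihh := ih hi
    rw [steinSolPo]
    rcases Nat.lt_or_ge (i + 1) n with hlt | hge
    · rw [if_pos hlt, ihh, piA_eq]
      have hpi1 : poissonPmf lam (i + 1) ≠ 0 := (pp_pos hlam (i + 1)).ne'
      have hpi : poissonPmf lam i = ((i : ℝ) + 1) * poissonPmf lam (i + 1) / lam := by
        have := pp_succ lam i
        push_cast at this
        field_simp
        linarith
      have hNN : NN lam n A (i + 1) = NN lam n A i
          + PP lam n * (if i + 1 ∈ A then poissonPmf lam (i + 1) else 0)
          - (∑ k ∈ A, poissonPmf lam k) * poissonPmf lam (i + 1) := by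
        unfold NN TT PP
        rw [Finset.sum_range_succ ((fun k => if k ∈ A then poissonPmf lam k else 0)) (i + 1),
          Finset.sum_range_succ (poissonPmf lam) (i + 1)]
        ring
      rw [hNN, hpi]
      have hi1 : ((i : ℝ) + 1) ≠ 0 := by positivity
      push_cast
      by_cases hmem : i + 1 ∈ A <;> simp only [hmem, if_true, if_false] <;> field_simp <;> ring
    · rw [if_neg (by omega)]
      have : i + 1 = n := by omega
      rw [this, NN_top hA]
      simp

lemma NN_eq_sum (lam : ℝ) (n : ℕ) (B : Finset ℕ) (i : ℕ) :
    NN lam n B i = ∑ k ∈ B, (PP lam n * (if k ≤ i then poissonPmf lam k else 0)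
      - poissonPmf lam k * PP lam i) := by
  unfold NN TT
  have hT : ∑ k ∈ Finset.range (i + 1), (if k ∈ B then poissonPmf lam k else 0)
      = ∑ k ∈ B, (if k ≤ i then poissonPmf lam k else 0) := by
    rw [Finset.sum_ite_mem, Finset.inter_comm, ← Finset.sum_ite_mem]
    apply Finset.sum_congr rfl
    intro k _
    simp [Finset.mem_range, Nat.lt_succ_iff]
  rw [hT, Finset.mul_sum, Finset.sum_mul, ← Finset.sum_sub_distrib]

lemma Dbound {lam : ℝ} (hlam : 0 < lam) {n t : ℕ} (ht : t + 1 ≤ n)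
    (B : Finset ℕ) :
    NN lam n B (t + 1) * poissonPmf lam t - NN lam n B t * poissonPmf lam (t + 1)
      ≤ (PP lam n - poissonPmf lam 0) * (poissonPmf lam t * poissonPmf lam (t + 1)) := by
  have hC : 0 ≤ (PP lam n - poissonPmf lam 0) * (poissonPmf lam t * poissonPmf lam (t + 1)) :=
    mul_nonneg (sub_nonneg.2 (p0_le_PP hlam n))
      (mul_nonneg (pp_pos hlam t).le (pp_pos hlam (t + 1)).le)
  rw [NN_eq_sum, NN_eq_sum, Finset.sum_mul, Finset.sum_mul, ← Finset.sum_sub_distrib]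
  calc ∑ k ∈ B, ((PP lam n * (if k ≤ t + 1 then poissonPmf lam k else 0)
          - poissonPmf lam k * PP lam (t + 1)) * poissonPmf lam t
        - (PP lam n * (if k ≤ t then poissonPmf lam k else 0)
          - poissonPmf lam k * PP lam t) * poissonPmf lam (t + 1))
      ≤ ∑ k ∈ B, (if k = t + 1 then
          (PP lam n - poissonPmf lam 0) * (poissonPmf lam t * poissonPmf lam (t + 1)) else 0) := by
        apply Finset.sum_le_sum
        intro k _
        have hL1 := L1 hlam t
        have hpt := pp_pos hlam t
        have hpt1 := pp_pos hlam (t + 1)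
        have hpk := pp_pos hlam k
        by_cases hk1 : k = t + 1
        · subst hk1
          rw [if_pos rfl, if_pos le_rfl, if_neg (by omega)]
          nlinarith [mul_le_mul_of_nonneg_left hL1 hpt1.le]
        · rw [if_neg hk1]
          by_cases hk2 : k ≤ t
          · rw [if_pos (by omega : k ≤ t + 1), if_pos hk2]
            have hL2 := L2 hlam ht
            nlinarith [mul_nonneg hpk.le (sub_nonneg.2 hL2)]
          · rw [if_neg (by omega : ¬ k ≤ t + 1), if_neg hk2]
            have hp0 := pp_pos hlam 0
            nlinarith [mul_nonneg hpk.le (sub_nonneg.2 hL1), mul_pos (mul_pos hpk hp0) hpt]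
    _ ≤ (PP lam n - poissonPmf lam 0) * (poissonPmf lam t * poissonPmf lam (t + 1)) := by
        rw [Finset.sum_ite_eq' B (t + 1)]
        split_ifs
        · exact le_rfl
        · exact hC

lemma NN_add_compl {lam : ℝ} {n : ℕ} {A : Finset ℕ} (hA : A ⊆ Finset.range (n + 1))
    {i : ℕ} (hi : i ≤ n) :
    NN lam n A i + NN lam n (Finset.range (n + 1) \ A) i = 0 := by
  have h1 : TT lam A i + TT lam (Finset.range (n + 1) \ A) i = PP lam i := by
    unfold TT PP
    rw [← Finset.sum_add_distrib]
    apply Finset.sum_congr rfl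
    intro k hk
    have hk' : k ∈ Finset.range (n + 1) := by
      rw [Finset.mem_range] at hk ⊢
      omega
    by_cases hmem : k ∈ A
    · simp [hmem, Finset.mem_sdiff]
    · simp [hmem, Finset.mem_sdiff, hk']
  have h2 : (∑ k ∈ A, poissonPmf lam k)
      + (∑ k ∈ Finset.range (n + 1) \ A, poissonPmf lam k) = PP lam n := by
    unfold PP
    rw [add_comm]
    exact Finset.sum_sdiff hA
  unfold NN
  linear_combination PP lam n * h1 - PP lam i * h2

/-- Stein factor bound for the truncated Poisson distribution: the first difference of
the Stein solution is bounded by `(1 - π₀)/λ`. -/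
theorem truncPoisson_stein_factor (lam : ℝ) (hlam : 0 < lam)
    (n : ℕ) (A : Finset ℕ) (hA : A ⊆ Finset.range (n + 1)) :
    ∀ i ≤ n, |steinSolPo lam n A (i + 1) - steinSolPo lam n A i|
      ≤ (1 - truncPoissonPmf lam n 0) / lam := by
  have hS : 0 < PP lam n := PP_pos hlam n
  have hp0 : 0 < poissonPmf lam 0 := pp_pos hlam 0
  have htarget : (1 - truncPoissonPmf lam n 0) / lam
      = (PP lam n - poissonPmf lam 0) / (PP lam n * lam) := by
    unfold truncPoissonPmf
    have : (∑ j ∈ Finset.range (n + 1), poissonPmf lam j) = PP lam n := rfl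
    rw [this]
    field_simp
  rw [htarget]
  intro i hi
  rcases i with _ | t
  · -- i = 0
    have hg1 := gform hlam n A hA 0 (by omega)
    have hg0 : steinSolPo lam n A 0 = 0 := rfl
    rw [hg1, hg0, sub_zero]
    have hN0 : NN lam n A 0 = PP lam n * (if 0 ∈ A then poissonPmf lam 0 else 0)
        - (∑ k ∈ A, poissonPmf lam k) * poissonPmf lam 0 := by
      unfold NN TT PP
      by_cases hmem : 0 ∈ A <;> simp [hmem]
    have hpAS : (∑ k ∈ A, poissonPmf lam k) ≤ PP lam n := by
      unfold PP
      exact Finset.sum_le_sum_of_subset_of_nonneg hA (fun j _ _ => (pp_pos hlam j).le)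
    have hNabs : |NN lam n A 0| ≤ (PP lam n - poissonPmf lam 0) * poissonPmf lam 0 := by
      rw [abs_le, hN0]
      by_cases hmem : 0 ∈ A
      · have hp0A : poissonPmf lam 0 ≤ ∑ k ∈ A, poissonPmf lam k :=
          Finset.single_le_sum (fun j _ => (pp_pos hlam j).le) hmem
        rw [if_pos hmem]
        constructor <;> nlinarith
      · have hsub : A ⊆ Finset.range (n + 1) \ {0} := by
          intro k hk
          rw [Finset.mem_sdiff, Finset.mem_singleton]
          exact ⟨hA hk, fun h => hmem (h ▸ hk)⟩
        have hsd : ∑ k ∈ Finset.range (n + 1) \ {0}, poissonPmf lam k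
            = PP lam n - poissonPmf lam 0 := by
          have := Finset.sum_sdiff (f := poissonPmf lam)
            (Finset.singleton_subset_iff.2 (Finset.mem_range.2 (by omega) : 0 ∈ Finset.range (n+1)))
          unfold PP
          simp only [Finset.sum_singleton] at this
          linarith
        have hpA' : (∑ k ∈ A, poissonPmf lam k) ≤ PP lam n - poissonPmf lam 0 := by
          rw [← hsd]
          exact Finset.sum_le_sum_of_subset_of_nonneg hsub (fun j _ _ => (pp_pos hlam j).le)
        have hpA0 : 0 ≤ ∑ k ∈ A, poissonPmf lam k :=
          Finset.sum_nonneg (fun j _ => (pp_pos hlam j).le)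
        rw [if_neg hmem]
        constructor <;> nlinarith
    rw [abs_div, abs_of_pos (by positivity : (0:ℝ) < lam * PP lam n * poissonPmf lam 0),
      div_le_div_iff₀ (by positivity) (by positivity)]
    nlinarith [mul_le_mul_of_nonneg_right hNabs (by positivity : (0:ℝ) ≤ PP lam n * lam)]
  · -- i = t + 1
    have ht : t + 1 ≤ n := hi
    have hg1 := gform hlam n A hA (t + 1) hi
    have hg0 := gform hlam n A hA t (by omega)
    have hpt := pp_pos hlam t
    have hpt1 := pp_pos hlam (t + 1)
    have hD : steinSolPo lam n A (t + 1 + 1) - steinSolPo lam n A (t + 1)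
        = (NN lam n A (t + 1) * poissonPmf lam t - NN lam n A t * poissonPmf lam (t + 1))
          / (lam * PP lam n * (poissonPmf lam t * poissonPmf lam (t + 1))) := by
      rw [hg1, hg0]
      field_simp
    have hub := Dbound hlam ht A
    have hlb : -((PP lam n - poissonPmf lam 0) * (poissonPmf lam t * poissonPmf lam (t + 1)))
        ≤ NN lam n A (t + 1) * poissonPmf lam t - NN lam n A t * poissonPmf lam (t + 1) := by
      have hco := Dbound hlam ht (Finset.range (n + 1) \ A)
      have h1 := NN_add_compl (lam := lam) hA (by omega : t ≤ n)
      have h2 := NN_add_compl (lam := lam) hA ht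
      nlinarith
    have habs : |NN lam n A (t + 1) * poissonPmf lam t - NN lam n A t * poissonPmf lam (t + 1)|
        ≤ (PP lam n - poissonPmf lam 0) * (poissonPmf lam t * poissonPmf lam (t + 1)) := by
      rw [abs_le]
      exact ⟨hlb, hub⟩
    rw [hD, abs_div,
      abs_of_pos (by positivity : (0:ℝ) < lam * PP lam n * (poissonPmf lam t * poissonPmf lam (t+1))),
      div_le_div_iff₀ (by positivity) (by positivity)]
    nlinarith [mul_le_mul_of_nonneg_right habs (by positivity : (0:ℝ) ≤ PP lam n * lam)]
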